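/- Let 0 ≤ γ < π, let η be admissible with E_{η;γ} continuous on ℝ, let c > 0 and μ ∈ ℝ be constants, and set g := E_{η;γ} ∗ a. Define, for continuously differentiable 2π-periodic ψ, the operators (A_p ψ)(α) = −i c ψ′(α) − μ ψ(α) (the quantised angular momentum) and (A_a ψ)(α) = g(α) ψ(α) (the angle operator). Then for every continuously differentiable 2π-periodic ψ and every α ∈ ℝ with α ∉ 2πℤ, the commutator satisfies ([A_p, A_a]ψ)(α) = (A_p(A_a ψ) − A_a(A_p ψ))(α) = −i c (1 − 2π E_{η;γ}(α)) ψ(α). -/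

import Mathlib

open Real MeasureTheory

/-- The admissibility constant `c_η = (2π/κ) ∫_{γ−π}^{γ} |η(q)|²/sin(γ−q) dq`. -/
noncomputable def cEta (κ γ : ℝ) (η : ℝ → ℂ) : ℝ :=
  2 * π / κ * ∫ q in (γ - π)..γ, ‖η q‖ ^ 2 / Real.sin (γ - q)

/-- The 2π-periodic function `E_{η;γ}(α) = (2π/(κ c_η)) |η(α)|²/sin(γ−α)`. -/
noncomputable def Efun (κ γ : ℝ) (η : ℝ → ℂ) (α : ℝ) : ℝ :=
  2 * π / (κ * cEta κ γ η) * ‖η α‖ ^ 2 / Real.sin (γ - α)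

/-- The 2π-periodic sawtooth (angle) function `a(α) = α` for `α ∈ [0, 2π)`. -/
noncomputable def saw (α : ℝ) : ℝ := α - 2 * π * (⌊α / (2 * π)⌋ : ℝ)

/-- The periodic convolution `g = E_{η;γ} ∗ a`. -/
noncomputable def convEa (κ γ : ℝ) (η : ℝ → ℂ) (α : ℝ) : ℝ :=
  ∫ q in (0:ℝ)..(2 * π), Efun κ γ η (α - q) * saw q

/-- The quantised angular momentum `(A_p ψ)(α) = −i c ψ′(α) − μ ψ(α)`. -/
noncomputable def Ap (c μ : ℝ) (ψ : ℝ → ℂ) (α : ℝ) : ℂ :=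
  -Complex.I * c * deriv ψ α - μ * ψ α

/-- Commutation relation between the quantised angular momentum `A_p` and the angle
operator `A_a ψ = (E_{η;γ} ∗ a) ψ`: for C¹ 2π-periodic `ψ` and `α ∉ 2πℤ`,
`([A_p, A_a]ψ)(α) = −i c (1 − 2π E_{η;γ}(α)) ψ(α)`. -/
theorem angle_momentum_commutator (κ γ : ℝ) (hκ : 0 < κ) (hγ0 : 0 ≤ γ) (hγπ : γ < π)
    (η : ℝ → ℂ) (hper : Function.Periodic η (2 * π))
    (hsupp : ∀ α ∈ Set.Ioo (γ - π) (γ + π), η α ≠ 0 → α ∈ Set.Ioo (γ - π) γ)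
    (hint : IntervalIntegrable (fun q => ‖η q‖ ^ 2 / Real.sin (γ - q)) volume (γ - π) γ)
    (hpos : 0 < cEta κ γ η)
    (hEc : Continuous (Efun κ γ η))
    (c μ : ℝ) (hc : 0 < c)
    (ψ : ℝ → ℂ) (hψ : ContDiff ℝ 1 ψ) (hψper : Function.Periodic ψ (2 * π))
    (α : ℝ) (hα : ∀ k : ℤ, α ≠ 2 * π * k) :
    Ap c μ (fun x => (convEa κ γ η x : ℂ) * ψ x) α -
        (convEa κ γ η α : ℂ) * Ap c μ ψ α =
      -Complex.I * c * (1 - 2 * π * Efun κ γ η α) * ψ α := by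
  have hπ : (0:ℝ) < π := Real.pi_pos
  set E : ℝ → ℝ := Efun κ γ η with hE
  -- periodicity of E
  have hEper : Function.Periodic E (2 * π) := by
    intro x
    simp only [hE, Efun]
    rw [hper x]
    have h1 : γ - (x + 2 * π) = γ - x - 2 * π := by ring
    rw [h1, Real.sin_sub_two_pi]
  have hEint : ∀ a b : ℝ, IntervalIntegrable E volume a b := fun a b =>
    hEc.intervalIntegrable a b
  -- E vanishes on [γ, γ+π]
  have hη0 : ∀ x ∈ Set.Icc γ (γ + π), E x = 0 := by
    intro x hx
    rcases eq_or_lt_of_le hx.2 with h2 | h2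
    · simp only [hE, Efun]
      have hs : Real.sin (γ - x) = 0 := by
        rw [h2, show γ - (γ + π) = -π by ring, Real.sin_neg, Real.sin_pi, neg_zero]
      rw [hs, div_zero]
    · have hmem : x ∈ Set.Ioo (γ - π) (γ + π) := ⟨by linarith [hx.1], h2⟩
      have hx0 : η x = 0 := by
        by_contra h
        exact absurd ((hsupp x hmem h).2) (not_lt.2 hx.1)
      simp only [hE, Efun, hx0, norm_zero, ne_eq, OfNat.ofNat_ne_zero,
        not_false_eq_true, zero_pow, mul_zero, zero_div]
  -- ∫_{γ-π}^{γ} E = 1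
  have hint1 : ∫ u in (γ - π)..γ, E u = 1 := by
    have heq : (∫ u in (γ - π)..γ, E u)
        = 2 * π / (κ * cEta κ γ η) * ∫ q in (γ - π)..γ, ‖η q‖ ^ 2 / Real.sin (γ - q) := by
      rw [← intervalIntegral.integral_const_mul]
      apply intervalIntegral.integral_congr
      intro x _
      simp only [hE, Efun, mul_div_assoc]
    rw [heq]
    have hI : ∫ q in (γ - π)..γ, ‖η q‖ ^ 2 / Real.sin (γ - q) = cEta κ γ η * κ / (2 * π) := by
      have hdef : cEta κ γ η = 2 * π / κ * ∫ q in (γ - π)..γ, ‖η q‖ ^ 2 / Real.sin (γ - q) := rfl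
      rw [hdef]
      field_simp
    rw [hI]
    field_simp
  -- ∫_{γ}^{γ+π} E = 0
  have hzero : ∫ u in γ..(γ + π), E u = 0 := by
    have hEOn : Set.EqOn E (fun _ => (0:ℝ)) (Set.uIcc γ (γ + π)) := by
      rw [Set.uIcc_of_le (by linarith)]
      exact hη0
    rw [intervalIntegral.integral_congr hEOn]
    simp
  -- ∫ over any period is 1
  have hperiod : ∫ u in (α - 2 * π)..α, E u = 1 := by
    have h := hEper.intervalIntegral_add_eq (α - 2 * π) (γ - π)
    rw [show α - 2 * π + 2 * π = α by ring, show γ - π + 2 * π = γ + π by ring] at h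
    rw [h, ← intervalIntegral.integral_add_adjacent_intervals (b := γ) (hEint _ _) (hEint _ _),
      hint1, hzero]
    norm_num
  -- saw(x-u) = x-u on the relevant interval
  have hsaw : ∀ x u : ℝ, u ∈ Set.Ioc (x - 2 * π) x → saw (x - u) = x - u := by
    intro x u hu
    have h1 : 0 ≤ x - u := by linarith [hu.2]
    have h2 : x - u < 2 * π := by linarith [hu.1]
    unfold saw
    have hfl : ⌊(x - u) / (2 * π)⌋ = 0 := by
      rw [Int.floor_eq_zero_iff, Set.mem_Ico]
      constructor
      · positivity
      · rw [div_lt_one (by positivity)]; exact h2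
    rw [hfl]
    push_cast
    ring
  -- representation of the convolution
  have hconv : ∀ x : ℝ, convEa κ γ η x = ∫ u in (x - 2 * π)..x, E u * (x - u) := by
    intro x
    unfold convEa
    have h1 : (∫ q in (0:ℝ)..(2 * π), Efun κ γ η (x - q) * saw q)
        = ∫ q in (0:ℝ)..(2 * π), (fun u => E u * saw (x - u)) (x - q) := by
      apply intervalIntegral.integral_congr
      intro q _
      simp only [hE, sub_sub_cancel]
    rw [h1, intervalIntegral.integral_comp_sub_left (fun u => E u * saw (x - u)) x, sub_zero]
    have hle : x - 2 * π ≤ x := by linarith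
    rw [intervalIntegral.integral_of_le hle, intervalIntegral.integral_of_le hle]
    apply setIntegral_congr_fun measurableSet_Ioc
    intro u hu
    show E u * saw (x - u) = E u * (x - u)
    rw [hsaw x u hu]
  -- FTC pieces
  set G1 : ℝ → ℝ := fun x => ∫ t in (0:ℝ)..x, E t with hG1def
  set G2 : ℝ → ℝ := fun x => ∫ t in (0:ℝ)..x, E t * t with hG2def
  have hEc2 : Continuous (fun t => E t * t) := hEc.mul continuous_id
  have hEint2 : ∀ a b : ℝ, IntervalIntegrable (fun t => E t * t) volume a b := fun a b =>
    hEc2.intervalIntegrable a b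
  have hG1 : ∀ x : ℝ, HasDerivAt G1 (E x) x := fun x =>
    intervalIntegral.integral_hasDerivAt_right (hEint 0 x)
      (hEc.aestronglyMeasurable.stronglyMeasurableAtFilter) hEc.continuousAt
  have hG2 : ∀ x : ℝ, HasDerivAt G2 (E x * x) x := fun x =>
    intervalIntegral.integral_hasDerivAt_right (hEint2 0 x)
      (hEc2.aestronglyMeasurable.stronglyMeasurableAtFilter) hEc2.continuousAt
  have hsplit1 : ∀ x : ℝ, G1 x - G1 (x - 2 * π) = ∫ u in (x - 2 * π)..x, E u := by
    intro x
    have h := intervalIntegral.integral_add_adjacent_intervals (a := (0:ℝ)) (b := x - 2 * π)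
      (c := x) (hEint _ _) (hEint _ _)
    simp only [hG1def]
    linarith
  have hsplit2 : ∀ x : ℝ, G2 x - G2 (x - 2 * π) = ∫ u in (x - 2 * π)..x, E u * u := by
    intro x
    have h := intervalIntegral.integral_add_adjacent_intervals (a := (0:ℝ)) (b := x - 2 * π)
      (c := x) (hEint2 _ _) (hEint2 _ _)
    simp only [hG2def]
    linarith
  have hrep : ∀ x : ℝ, convEa κ γ η x = x * (G1 x - G1 (x - 2 * π)) - (G2 x - G2 (x - 2 * π)) := by
    intro x
    rw [hconv x, hsplit1, hsplit2, ← intervalIntegral.integral_const_mul,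
      ← intervalIntegral.integral_sub (((hEint _ _).const_mul x))
        (hEint2 _ _)]
    apply intervalIntegral.integral_congr
    intro u _
    ring
  -- derivative of convEa
  have hd : HasDerivAt (convEa κ γ η) (1 - 2 * π * E α) α := by
    have h1' : HasDerivAt (fun x => G1 (x - 2 * π)) (E (α - 2 * π)) α := by
      simpa [Function.comp_def] using (hG1 (α - 2 * π)).comp α ((hasDerivAt_id α).sub_const (2 * π))
    have h2' : HasDerivAt (fun x => G2 (x - 2 * π)) (E (α - 2 * π) * (α - 2 * π)) α := by
      simpa [Function.comp_def] using (hG2 (α - 2 * π)).comp α ((hasDerivAt_id α).sub_const (2 * π))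
    have hx : HasDerivAt (fun x => x * (G1 x - G1 (x - 2 * π)) - (G2 x - G2 (x - 2 * π)))
        (1 * (G1 α - G1 (α - 2 * π)) + α * (E α - E (α - 2 * π))
          - (E α * α - E (α - 2 * π) * (α - 2 * π))) α :=
      ((hasDerivAt_id α).mul ((hG1 α).sub h1')).sub ((hG2 α).sub h2')
    have e1 : E (α - 2 * π) = E α := by
      have h := hEper (α - 2 * π)
      rw [sub_add_cancel] at h
      exact h.symm
    have e2 : G1 α - G1 (α - 2 * π) = 1 := by rw [hsplit1, hperiod]
    have hval : 1 * (G1 α - G1 (α - 2 * π)) + α * (E α - E (α - 2 * π))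
        - (E α * α - E (α - 2 * π) * (α - 2 * π)) = 1 - 2 * π * E α := by
      rw [e1, e2]; ring
    rw [hval] at hx
    have hfun : convEa κ γ η = fun x => x * (G1 x - G1 (x - 2 * π)) - (G2 x - G2 (x - 2 * π)) :=
      funext hrep
    rw [hfun]
    exact hx
  -- assemble
  have hdC : HasDerivAt (fun x : ℝ => (convEa κ γ η x : ℂ)) ((1 - 2 * π * E α : ℝ) : ℂ) α :=
    hd.ofReal_comp
  have hψd : HasDerivAt ψ (deriv ψ α) α :=
    ((hψ.differentiable one_ne_zero) α).hasDerivAt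
  have hprod : HasDerivAt (fun x => (convEa κ γ η x : ℂ) * ψ x)
      (((1 - 2 * π * E α : ℝ) : ℂ) * ψ α + (convEa κ γ η α : ℂ) * deriv ψ α) α :=
    hdC.mul hψd
  simp only [Ap]
  rw [hprod.deriv]
  push_cast
  ring
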